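/- Let I be a nonempty proper subset of [n] with nested components J_1, …, J_v. Then each W(J_i) is nonempty and, writing M_i = max W(J_i), I = ⋃_{i=1}^{v} ( R_{δ_{M_i}(J_i)} ∖ ( ⋃_{j ∈ W(J_i), j ≠ M_i} ( [n] ∖ R_{δ_j(J_i)} ) ) ). -/
import Mathlib


open Finset

attribute [local instance] Classical.propDecidable

namespace AssocPaper

/-- `x` and `y` are consecutive elements of the finite set `S`. -/
def ConsecIn (S : Finset ℕ) (x y : ℕ) : Prop :=
  x ∈ S ∧ y ∈ S ∧ x < y ∧ ∀ z ∈ S, ¬ (x < z ∧ z < y)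

/-- `D̄ = D ∪ {0, n+1}`. -/
def Dbar (n : ℕ) (D : Finset ℕ) : Finset ℕ := insert 0 (insert (n + 1) D)

/-- The boundary edges of the `c`-labeled `(n+2)`-gon, given by endpoints `x < y`:
pairs of consecutive elements of `D̄`; if `U ≠ ∅` also `{0, min U}`, `{max U, n+1}` and
pairs of consecutive elements of `U`; if `U = ∅` also `{0, n+1}`. -/
def IsBoundary (n : ℕ) (D U : Finset ℕ) (x y : ℕ) : Prop :=
  ConsecIn (Dbar n D) x y
    ∨ (U.Nonempty ∧
        ((x = 0 ∧ y ∈ U ∧ ∀ u ∈ U, y ≤ u)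
          ∨ (y = n + 1 ∧ x ∈ U ∧ ∀ u ∈ U, u ≤ x)
          ∨ ConsecIn U x y))
    ∨ (U = ∅ ∧ x = 0 ∧ y = n + 1)

/-- `{x, y}` (with `x < y ≤ n+1`) is a proper diagonal: a diagonal of the
`(n+2)`-gon which is not a boundary edge. -/
def IsProper (n : ℕ) (D U : Finset ℕ) (x y : ℕ) : Prop :=
  x < y ∧ y ≤ n + 1 ∧ ¬ IsBoundary n D U x y

/-- The set `R_δ` for a proper diagonal `δ = {x,y}` with `x < y`. -/
noncomputable def Rdiag (n : ℕ) (D U : Finset ℕ) (x y : ℕ) : Finset ℕ :=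
  if x ∈ U then
    (if y ∈ U then (D ∪ U.filter fun u => u ≤ x) ∪ U.filter fun u => y ≤ u
     else D.filter (fun d => d < y) ∪ U.filter fun u => u ≤ x)
  else
    (if y ∈ U then D.filter (fun d => x < d) ∪ U.filter fun u => y ≤ u
     else D.filter fun d => x < d ∧ d < y)

/-- The extension of `R` to non-proper and degenerate diagonals `δ = {x,y}`, `x ≤ y`:
`R_δ = [n]` if `U = ∅` and `δ = {0,n+1}`; for other non-proper or degenerate `δ`,
`R_δ = ∅` if `x,y ∈ D̄` and `R_δ = [n]` otherwise. -/
noncomputable def Rext (n : ℕ) (D U : Finset ℕ) (x y : ℕ) : Finset ℕ :=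
  if IsProper n D U x y then Rdiag n D U x y
  else if U = ∅ ∧ x = 0 ∧ y = n + 1 then Finset.Icc 1 n
  else if x ∈ U ∨ y ∈ U then Finset.Icc 1 n
  else ∅

/-- The extension of the right-hand sides `z_{R_δ}` to non-proper and degenerate
diagonals, given the values `w` on proper diagonals and the value `zn = z_{[n]}`. -/
noncomputable def zext (n : ℕ) (D U : Finset ℕ) (w : ℕ × ℕ → ℝ) (zn : ℝ) (x y : ℕ) : ℝ :=
  if IsProper n D U x y then w (x, y)
  else if U = ∅ ∧ x = 0 ∧ y = n + 1 then zn
  else if x ∈ U ∨ y ∈ U then zn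
  else 0

/-- `a(I)`: the largest element of `D ∪ {0}` smaller than `min I`. -/
noncomputable def aI (D I : Finset ℕ) : ℕ :=
  ((insert 0 D).filter fun e => ∀ i ∈ I, e < i).sup id

/-- `b(I)`: the smallest element of `D ∪ {n+1}` larger than `max I`. -/
noncomputable def bI (n : ℕ) (D I : Finset ℕ) : ℕ :=
  sInf {e : ℕ | e ∈ insert (n + 1) D ∧ ∀ i ∈ I, i < e}

/-- The minimum element `γ` of `I` (junk value for `I = ∅`). -/
noncomputable def minEl (I : Finset ℕ) : ℕ := sInf {i : ℕ | i ∈ I}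

/-- The maximum element `Γ` of `I` (junk value `0` for `I = ∅`). -/
noncomputable def maxEl (I : Finset ℕ) : ℕ := I.sup id

/-- A nonempty `I ⊆ [n]` is nested if every `d ∈ D` with `a(I) < d < b(I)` lies in `I`. -/
def IsNested (n : ℕ) (D I : Finset ℕ) : Prop :=
  I.Nonempty ∧ I ⊆ Finset.Icc 1 n ∧
    ∀ d ∈ D, aI D I < d → d < bI n D I → d ∈ I

/-- The nested components of `I`: the inclusion-maximal nested subsets of `I`. -/
noncomputable def nestedComponents (n : ℕ) (D I : Finset ℕ) : Finset (Finset ℕ) :=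
  I.powerset.filter fun J =>
    IsNested n D J ∧ ∀ K ∈ I.powerset, IsNested n D K → J ⊆ K → J = K

/-- `v(I)`: the number of nested components of `I`. -/
noncomputable def vI (n : ℕ) (D I : Finset ℕ) : ℕ := (nestedComponents n D I).card

/-- `x` is the last element of one of the up intervals of `J`
(an element of `J ∩ U` whose successor in `U`, if any, is not in `J`). -/
def IsRunEnd (U J : Finset ℕ) (x : ℕ) : Prop :=
  x ∈ J ∧ x ∈ U ∧ ∀ y, ConsecIn U x y → y ∉ J

/-- `y` is the first element of one of the up intervals of `J`
(an element of `J ∩ U` whose predecessor in `U`, if any, is not in `J`). -/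
def IsRunStart (U J : Finset ℕ) (y : ℕ) : Prop :=
  y ∈ J ∧ y ∈ U ∧ ∀ x, ConsecIn U x y → x ∉ J

/-- `{x,y}` is one of the diagonals `δ_1(J), …, δ_{w+1}(J)` associated to a nested
set `J` with `a = a(J)`, `b = b(J)` and up intervals `[α_1,β_1]_U, …, [α_w,β_w]_U`,
namely `{a,α_1}, {β_1,α_2}, …, {β_w,b}` (and `{a,b}` when `w = 0`). -/
def AssocDiag (n : ℕ) (D U J : Finset ℕ) (x y : ℕ) : Prop :=
  x < y ∧ (x = aI D J ∨ IsRunEnd U J x) ∧ (y = bI n D J ∨ IsRunStart U J y) ∧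
    ∀ u ∈ J ∩ U, ¬ (x < u ∧ u < y)

/-- `W(J)`: the proper diagonals among the diagonals associated to the nested set `J`. -/
noncomputable def WJ (n : ℕ) (D U J : Finset ℕ) : Finset (ℕ × ℕ) :=
  (Finset.range (n + 2) ×ˢ Finset.range (n + 2)).filter fun p =>
    AssocDiag n D U J p.1 p.2 ∧ IsProper n D U p.1 p.2

/-- The tight value `z^c_I = ∑_i ( ∑_{j ∈ W(J_i)} w_{δ_j(J_i)} − (|W(J_i)|−1)·z_{[n]} )`,
the sum running over the nested components `J_i` of `I` (so `z^c_∅ = 0`). -/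
noncomputable def zc (n : ℕ) (D U : Finset ℕ) (w : ℕ × ℕ → ℝ) (zn : ℝ) (I : Finset ℕ) : ℝ :=
  ∑ J ∈ nestedComponents n D I,
    ((∑ p ∈ WJ n D U J, w p) - (((WJ n D U J).card : ℝ) - 1) * zn)

/-- The Minkowski coefficient `y_I = ∑_{J ⊆ I} (−1)^{|I∖J|} z^c_J`. -/
noncomputable def yI (n : ℕ) (D U : Finset ℕ) (w : ℕ × ℕ → ℝ) (zn : ℝ) (I : Finset ℕ) : ℝ :=
  ∑ J ∈ I.powerset, (-1 : ℝ) ^ (I \ J).card * zc n D U w zn J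

/-- The associahedron right-hand sides `w_δ = |R_δ|·(|R_δ|+1)/2`. -/
noncomputable def wAs (n : ℕ) (D U : Finset ℕ) (p : ℕ × ℕ) : ℝ :=
  (((Rdiag n D U p.1 p.2).card : ℝ) * (((Rdiag n D U p.1 p.2).card : ℝ) + 1)) / 2

/-- The associahedron value `z_{[n]} = n(n+1)/2`. -/
noncomputable def znAs (n : ℕ) : ℝ := ((n : ℝ) * ((n : ℝ) + 1)) / 2


section Helpers

variable {n : ℕ} {D U : Finset ℕ}

lemma D_sub (hDU : D ∪ U = Finset.Icc 1 n) : D ⊆ Finset.Icc 1 n := by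
  rw [← hDU]; exact Finset.subset_union_left

lemma U_sub (hDU : D ∪ U = Finset.Icc 1 n) : U ⊆ Finset.Icc 1 n := by
  rw [← hDU]; exact Finset.subset_union_right

lemma U_pos (hDU : D ∪ U = Finset.Icc 1 n) {u : ℕ} (hu : u ∈ U) : 1 ≤ u ∧ u ≤ n := by
  have := U_sub hDU hu; simpa [Finset.mem_Icc] using this

lemma D_pos (hDU : D ∪ U = Finset.Icc 1 n) {d : ℕ} (hd : d ∈ D) : 1 ≤ d ∧ d ≤ n := by
  have := D_sub hDU hd; simpa [Finset.mem_Icc] using this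

lemma notU_of_memD (hdisj : Disjoint D U) {d : ℕ} (hd : d ∈ D) : d ∉ U :=
  fun h => (Finset.disjoint_left.mp hdisj hd) h

lemma notD_of_memU (hdisj : Disjoint D U) {u : ℕ} (hu : u ∈ U) : u ∉ D :=
  fun h => (Finset.disjoint_left.mp hdisj h) hu

lemma not_mem_Dbar_of_memU (hDU : D ∪ U = Finset.Icc 1 n) (hdisj : Disjoint D U)
    {u : ℕ} (hu : u ∈ U) : u ∉ Dbar n D := by
  have h := U_pos hDU hu
  simp only [Dbar, Finset.mem_insert]
  push_neg
  exact ⟨by omega, by omega, notD_of_memU hdisj hu⟩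

-- aI spec
lemma aI_mem_and_lt {J : Finset ℕ} (hJ : J.Nonempty) (hJsub : J ⊆ Finset.Icc 1 n) :
    aI D J ∈ insert 0 D ∧ ∀ j ∈ J, aI D J < j := by
  classical
  set S := (insert 0 D).filter fun e => ∀ i ∈ J, e < i with hS
  have h0 : (0:ℕ) ∈ S := by
    refine Finset.mem_filter.mpr ⟨Finset.mem_insert_self 0 D, fun i hi => ?_⟩
    have := hJsub hi; simp [Finset.mem_Icc] at this; omega
  have hSne : S.Nonempty := ⟨0, h0⟩
  obtain ⟨b, hb, hbe⟩ := Finset.exists_mem_eq_sup S hSne id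
  have key : aI D J ∈ S := by rw [aI, ← hS, hbe]; exact hb
  have := Finset.mem_filter.mp key
  exact ⟨this.1, this.2⟩

lemma le_aI {J : Finset ℕ} {e : ℕ} (he : e ∈ insert 0 D) (hlt : ∀ j ∈ J, e < j) :
    e ≤ aI D J := by
  classical
  apply Finset.le_sup (f := id)
  simp only [Finset.mem_filter]
  exact ⟨he, hlt⟩

lemma bI_mem_and_lt {J : Finset ℕ} (hJsub : J ⊆ Finset.Icc 1 n) :
    bI n D J ∈ insert (n+1) D ∧ ∀ j ∈ J, j < bI n D J := by
  have hne : ((n+1) : ℕ) ∈ {e : ℕ | e ∈ insert (n + 1) D ∧ ∀ i ∈ J, i < e} := by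
    constructor
    · simp
    · intro i hi; have := hJsub hi; simp [Finset.mem_Icc] at this; omega
  have := Nat.sInf_mem (⟨n+1, hne⟩ : {e : ℕ | e ∈ insert (n + 1) D ∧ ∀ i ∈ J, i < e}.Nonempty)
  exact ⟨this.1, this.2⟩

lemma bI_le {J : Finset ℕ} {e : ℕ} (he : e ∈ insert (n+1) D) (hlt : ∀ j ∈ J, j < e) :
    bI n D J ≤ e := Nat.sInf_le ⟨he, hlt⟩

lemma aI_le_n (hDU : D ∪ U = Finset.Icc 1 n) {J : Finset ℕ} (hJ : J.Nonempty)
    (hJsub : J ⊆ Finset.Icc 1 n) : aI D J ≤ n := by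
  rcases Finset.mem_insert.mp (aI_mem_and_lt hJ hJsub).1 with h | h
  · rw [h]; exact Nat.zero_le n
  · exact (D_pos hDU h).2

lemma bI_le_n1 {J : Finset ℕ} (hJsub : J ⊆ Finset.Icc 1 n) (hDU : D ∪ U = Finset.Icc 1 n) :
    bI n D J ≤ n + 1 := by
  rcases Finset.mem_insert.mp (bI_mem_and_lt (n := n) (D := D) hJsub).1 with h | h
  · omega
  · have := (D_pos hDU h).2; omega

lemma aI_notU (hDU : D ∪ U = Finset.Icc 1 n) (hdisj : Disjoint D U) {J : Finset ℕ}
    (hJ : J.Nonempty) (hJsub : J ⊆ Finset.Icc 1 n) : aI D J ∉ U := by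
  rcases Finset.mem_insert.mp (aI_mem_and_lt hJ hJsub).1 with h | h
  · rw [h]; intro hc; have := U_pos hDU hc; omega
  · exact notU_of_memD hdisj h

lemma bI_notU (hDU : D ∪ U = Finset.Icc 1 n) (hdisj : Disjoint D U) {J : Finset ℕ}
    (hJsub : J ⊆ Finset.Icc 1 n) : bI n D J ∉ U := by
  rcases Finset.mem_insert.mp (bI_mem_and_lt (n := n) (D := D) hJsub).1 with h | h
  · rw [h]; intro hc; have := U_pos hDU hc; omega
  · exact notU_of_memD hdisj h

end Helpers
section Helpers2

variable {n : ℕ} {D U : Finset ℕ}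

lemma Rdiag_UU {x y : ℕ} (hx : x ∈ U) (hy : y ∈ U) :
    Rdiag n D U x y = (D ∪ U.filter fun u => u ≤ x) ∪ U.filter fun u => y ≤ u := by
  rw [Rdiag, if_pos hx, if_pos hy]

lemma Rdiag_UD {x y : ℕ} (hx : x ∈ U) (hy : y ∉ U) :
    Rdiag n D U x y = D.filter (fun d => d < y) ∪ U.filter fun u => u ≤ x := by
  rw [Rdiag, if_pos hx, if_neg hy]

lemma Rdiag_DU {x y : ℕ} (hx : x ∉ U) (hy : y ∈ U) :
    Rdiag n D U x y = D.filter (fun d => x < d) ∪ U.filter fun u => y ≤ u := by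
  rw [Rdiag, if_neg hx, if_pos hy]

lemma Rdiag_DD {x y : ℕ} (hx : x ∉ U) (hy : y ∉ U) :
    Rdiag n D U x y = D.filter fun d => x < d ∧ d < y := by
  rw [Rdiag, if_neg hx, if_neg hy]

lemma Rdiag_subset (hDU : D ∪ U = Finset.Icc 1 n) (x y : ℕ) :
    Rdiag n D U x y ⊆ Finset.Icc 1 n := by
  intro z hz
  rw [← hDU]
  rw [Rdiag] at hz
  split_ifs at hz <;> simp only [Finset.mem_union, Finset.mem_filter] at hz ⊢ <;> tauto

lemma mem_WJ {J : Finset ℕ} {x y : ℕ} (hx : x ≤ n + 1) (hy : y ≤ n + 1)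
    (h1 : AssocDiag n D U J x y) (h2 : IsProper n D U x y) : (x, y) ∈ WJ n D U J := by
  rw [WJ, Finset.mem_filter, Finset.mem_product]
  exact ⟨⟨Finset.mem_range.mpr (by omega), Finset.mem_range.mpr (by omega)⟩, h1, h2⟩

lemma of_mem_WJ {J : Finset ℕ} {p : ℕ × ℕ} (hp : p ∈ WJ n D U J) :
    AssocDiag n D U J p.1 p.2 ∧ IsProper n D U p.1 p.2 :=
  (Finset.mem_filter.mp hp).2

-- nested basics
lemma nested_lt {J : Finset ℕ} (hJ : IsNested n D J) {j : ℕ} (hj : j ∈ J) :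
    aI D J < j ∧ j < bI n D J :=
  ⟨(aI_mem_and_lt hJ.1 hJ.2.1).2 j hj, (bI_mem_and_lt hJ.2.1).2 j hj⟩

-- first associated diagonal
lemma runStart_min {J : Finset ℕ} (hJU : (J ∩ U).Nonempty) :
    IsRunStart U J ((J ∩ U).min' hJU) := by
  have hm := Finset.min'_mem _ hJU
  rw [Finset.mem_inter] at hm
  refine ⟨hm.1, hm.2, fun x hcons hxJ => ?_⟩
  obtain ⟨hxU, _, hlt, _⟩ := hcons
  have : (J ∩ U).min' hJU ≤ x := Finset.min'_le _ _ (Finset.mem_inter.mpr ⟨hxJ, hxU⟩)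
  omega

lemma runEnd_max {J : Finset ℕ} (hJU : (J ∩ U).Nonempty) :
    IsRunEnd U J ((J ∩ U).max' hJU) := by
  have hm := Finset.max'_mem _ hJU
  rw [Finset.mem_inter] at hm
  refine ⟨hm.1, hm.2, fun y hcons hyJ => ?_⟩
  obtain ⟨_, hyU, hlt, _⟩ := hcons
  have : y ≤ (J ∩ U).max' hJU := Finset.le_max' _ _ (Finset.mem_inter.mpr ⟨hyJ, hyU⟩)
  omega

lemma assoc_first {J : Finset ℕ} (hJ : IsNested n D J) (hJU : (J ∩ U).Nonempty) :
    AssocDiag n D U J (aI D J) ((J ∩ U).min' hJU) := by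
  have hm := Finset.min'_mem _ hJU
  rw [Finset.mem_inter] at hm
  refine ⟨(nested_lt hJ hm.1).1, Or.inl rfl, Or.inr (runStart_min hJU), ?_⟩
  intro u hu
  have := Finset.min'_le _ _ hu
  omega

lemma assoc_last {J : Finset ℕ} (hJ : IsNested n D J) (hJU : (J ∩ U).Nonempty) :
    AssocDiag n D U J ((J ∩ U).max' hJU) (bI n D J) := by
  have hm := Finset.max'_mem _ hJU
  rw [Finset.mem_inter] at hm
  refine ⟨(nested_lt hJ hm.1).2, Or.inr (runEnd_max hJU), Or.inl rfl, ?_⟩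
  intro u hu
  have := Finset.le_max' _ _ hu
  omega

lemma assoc_only {J : Finset ℕ} (hJ : IsNested n D J) (hJU : J ∩ U = ∅) :
    AssocDiag n D U J (aI D J) (bI n D J) := by
  obtain ⟨j, hj⟩ := hJ.1
  have := nested_lt hJ hj
  exact ⟨by omega, Or.inl rfl, Or.inl rfl, by simp [hJU]⟩

-- properness of first diagonal (or boundary special form)
lemma proper_first (hDU : D ∪ U = Finset.Icc 1 n) (hdisj : Disjoint D U)
    {J : Finset ℕ} (hJ : IsNested n D J) (hJU : (J ∩ U).Nonempty) :
    IsProper n D U (aI D J) ((J ∩ U).min' hJU)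
      ∨ (aI D J = 0 ∧ ∀ u ∈ U, (J ∩ U).min' hJU ≤ u) := by
  set a := aI D J with ha
  set α := (J ∩ U).min' hJU with hα
  have hm := Finset.min'_mem _ hJU
  rw [Finset.mem_inter] at hm
  have hαU : α ∈ U := hm.2
  have hαn := U_pos hDU hαU
  have haα : a < α := (nested_lt hJ hm.1).1
  have haU : a ∉ U := aI_notU hDU hdisj hJ.1 hJ.2.1
  by_cases hb : IsBoundary n D U a α
  · rcases hb with h1 | ⟨hUne, h2⟩ | h3
    · exact absurd h1.2.1 (not_mem_Dbar_of_memU hDU hdisj hαU)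
    · rcases h2 with ⟨h, _, hle⟩ | ⟨h, hc, _⟩ | hc
      · exact Or.inr ⟨h, hle⟩
      · omega
      · exact absurd hc.1 haU
    · rw [h3.1] at hαU; simp at hαU
  · exact Or.inl ⟨haα, by omega, hb⟩

lemma proper_last (hDU : D ∪ U = Finset.Icc 1 n) (hdisj : Disjoint D U)
    {J : Finset ℕ} (hJ : IsNested n D J) (hJU : (J ∩ U).Nonempty) :
    IsProper n D U ((J ∩ U).max' hJU) (bI n D J)
      ∨ (bI n D J = n + 1 ∧ ∀ u ∈ U, u ≤ (J ∩ U).max' hJU) := by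
  set β := (J ∩ U).max' hJU with hβ
  set b := bI n D J with hbdef
  have hm := Finset.max'_mem _ hJU
  rw [Finset.mem_inter] at hm
  have hβU : β ∈ U := hm.2
  have hβn := U_pos hDU hβU
  have hβb : β < b := (nested_lt hJ hm.1).2
  have hbU : b ∉ U := bI_notU hDU hdisj hJ.2.1
  have hbn : b ≤ n + 1 := bI_le_n1 hJ.2.1 hDU
  by_cases hb : IsBoundary n D U β b
  · rcases hb with h1 | ⟨hUne, h2⟩ | h3
    · exact absurd h1.1 (not_mem_Dbar_of_memU hDU hdisj hβU)
    · rcases h2 with ⟨h, hc, _⟩ | ⟨h, _, hle⟩ | hc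
      · omega
      · exact Or.inr ⟨h, hle⟩
      · exact absurd hc.2.1 hbU
    · rw [h3.1] at hβU; simp at hβU
  · exact Or.inl ⟨hβb, hbn, hb⟩

lemma proper_only (hDU : D ∪ U = Finset.Icc 1 n) (hdisj : Disjoint D U)
    {J : Finset ℕ} (hJ : IsNested n D J) (hJU : J ∩ U = ∅)
    (hJne : J ≠ Finset.Icc 1 n) : IsProper n D U (aI D J) (bI n D J) := by
  set a := aI D J with ha
  set b := bI n D J with hbdef
  obtain ⟨j, hj⟩ := hJ.1
  have hjD : j ∈ D := by
    have hjIcc := hJ.2.1 hj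
    rw [← hDU, Finset.mem_union] at hjIcc
    rcases hjIcc with h | h
    · exact h
    · exact absurd (Finset.mem_inter.mpr ⟨hj, h⟩) (by simp [hJU])
  have hab := nested_lt hJ hj
  have haU : a ∉ U := aI_notU hDU hdisj hJ.1 hJ.2.1
  have hbU : b ∉ U := bI_notU hDU hdisj hJ.2.1
  have hbn : b ≤ n + 1 := bI_le_n1 hJ.2.1 hDU
  refine ⟨by omega, hbn, ?_⟩
  rintro (h1 | ⟨hUne, h2⟩ | h3)
  · exact h1.2.2.2 j (by simp [Dbar, hjD]) ⟨hab.1, hab.2⟩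
  · rcases h2 with ⟨_, hc, _⟩ | ⟨_, hc, _⟩ | hc
    · exact hbU hc
    · exact haU hc
    · exact haU hc.1
  · obtain ⟨hU0, ha0, hb1⟩ := h3
    apply hJne
    apply Finset.Subset.antisymm hJ.2.1
    intro d hd
    have hdD : d ∈ D := by rw [← hDU, hU0, Finset.union_empty] at hd; exact hd
    have hdn : 1 ≤ d ∧ d ≤ n := by simp [Finset.mem_Icc] at hd; omega
    exact hJ.2.2 d hdD (by omega) (by omega)

-- middle diagonal around a missing u
lemma assoc_mid (hDU : D ∪ U = Finset.Icc 1 n) (hdisj : Disjoint D U)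
    {J : Finset ℕ} (hJ : IsNested n D J) {u : ℕ} (hu : u ∈ U) (huJ : u ∉ J)
    (h1 : ∃ t ∈ J ∩ U, t < u) (h2 : ∃ t ∈ J ∩ U, u < t) :
    ∃ x y, (x, y) ∈ WJ n D U J ∧ x < u ∧ u < y ∧ x ∈ U ∧ y ∈ U := by
  classical
  set T1 := (J ∩ U).filter (fun t => t < u) with hT1
  set T2 := (J ∩ U).filter (fun t => u < t) with hT2
  have hT1ne : T1.Nonempty := by
    obtain ⟨t, ht, htu⟩ := h1; exact ⟨t, Finset.mem_filter.mpr ⟨ht, htu⟩⟩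
  have hT2ne : T2.Nonempty := by
    obtain ⟨t, ht, htu⟩ := h2; exact ⟨t, Finset.mem_filter.mpr ⟨ht, htu⟩⟩
  set x := T1.max' hT1ne with hx
  set y := T2.min' hT2ne with hy
  have hxmem : x ∈ (J ∩ U).filter (fun t => t < u) := Finset.max'_mem _ hT1ne
  have hymem : y ∈ (J ∩ U).filter (fun t => u < t) := Finset.min'_mem _ hT2ne
  rw [Finset.mem_filter, Finset.mem_inter] at hxmem
  rw [Finset.mem_filter, Finset.mem_inter] at hymem
  obtain ⟨⟨hxJ, hxU⟩, hxu⟩ := hxmem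
  obtain ⟨⟨hyJ, hyU⟩, huy⟩ := hymem
  have hxn := U_pos hDU hxU
  have hyn := U_pos hDU hyU
  have hun := U_pos hDU hu
  have hxmax : ∀ t ∈ J ∩ U, t < u → t ≤ x := fun t ht htu =>
    Finset.le_max' T1 t (show t ∈ (J ∩ U).filter (fun s => s < u) from Finset.mem_filter.mpr ⟨ht, htu⟩)
  have hymin : ∀ t ∈ J ∩ U, u < t → y ≤ t := fun t ht htu =>
    Finset.min'_le T2 t (show t ∈ (J ∩ U).filter (fun s => u < s) from Finset.mem_filter.mpr ⟨ht, htu⟩)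
  have hassoc : AssocDiag n D U J x y := by
    refine ⟨by omega, Or.inr ⟨hxJ, hxU, ?_⟩, Or.inr ⟨hyJ, hyU, ?_⟩, ?_⟩
    · intro y' hcons hy'J
      obtain ⟨_, hy'U, hlt, hno⟩ := hcons
      have hy'm : y' ∈ J ∩ U := Finset.mem_inter.mpr ⟨hy'J, hy'U⟩
      rcases lt_trichotomy y' u with h | h | h
      · have := hxmax y' hy'm h; omega
      · rw [h] at hy'J; exact huJ hy'J
      · exact hno u hu ⟨hxu, h⟩
    · intro x' hcons hx'J
      obtain ⟨hx'U, _, hlt, hno⟩ := hcons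
      have hx'm : x' ∈ J ∩ U := Finset.mem_inter.mpr ⟨hx'J, hx'U⟩
      rcases lt_trichotomy x' u with h | h | h
      · exact hno u hu ⟨h, huy⟩
      · rw [h] at hx'J; exact huJ hx'J
      · have := hymin x' hx'm h; omega
    · intro t ht hc
      rcases lt_trichotomy t u with h | h | h
      · have := hxmax t ht h; omega
      · rw [h] at ht; exact huJ (Finset.mem_inter.mp ht).1
      · have := hymin t ht h; omega
  have hproper : IsProper n D U x y := by
    refine ⟨by omega, by omega, ?_⟩
    rintro (hc | ⟨hUne, hc⟩ | hc)
    · exact not_mem_Dbar_of_memU hDU hdisj hxU hc.1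
    · rcases hc with ⟨h, _, _⟩ | ⟨h, _, _⟩ | hc
      · omega
      · omega
      · exact hc.2.2.2 u hu ⟨hxu, huy⟩
    · rw [hc.1] at hxU; simp at hxU
  exact ⟨x, y, mem_WJ (by omega) (by omega) hassoc hproper, hxu, huy, hxU, hyU⟩

end Helpers2
section Helpers3

variable {n : ℕ} {D U : Finset ℕ}

lemma mem_Rdiag_of_mem (hDU : D ∪ U = Finset.Icc 1 n) (hdisj : Disjoint D U)
    {J : Finset ℕ} (hJ : IsNested n D J) {x y : ℕ} (hA : AssocDiag n D U J x y)
    {j : ℕ} (hj : j ∈ J) : j ∈ Rdiag n D U x y := by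
  obtain ⟨hxy, hx, hy, hno⟩ := hA
  have hja := (nested_lt hJ hj).1
  have hjb := (nested_lt hJ hj).2
  have haU : aI D J ∉ U := aI_notU hDU hdisj hJ.1 hJ.2.1
  have hbU : bI n D J ∉ U := bI_notU hDU hdisj hJ.2.1
  have hxa : x ∉ U → x = aI D J := by
    intro hxU; rcases hx with h | h
    · exact h
    · exact absurd h.2.1 hxU
  have hyb : y ∉ U → y = bI n D J := by
    intro hyU; rcases hy with h | h
    · exact h
    · exact absurd h.2.1 hyU
  by_cases hjD : j ∈ D
  · by_cases hxU : x ∈ U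
    · by_cases hyU : y ∈ U
      · rw [Rdiag_UU hxU hyU]
        exact Finset.mem_union_left _ (Finset.mem_union_left _ hjD)
      · rw [Rdiag_UD hxU hyU]
        exact Finset.mem_union_left _ (Finset.mem_filter.mpr ⟨hjD, (hyb hyU) ▸ hjb⟩)
    · by_cases hyU : y ∈ U
      · rw [Rdiag_DU hxU hyU]
        exact Finset.mem_union_left _ (Finset.mem_filter.mpr ⟨hjD, (hxa hxU) ▸ hja⟩)
      · rw [Rdiag_DD hxU hyU]
        exact Finset.mem_filter.mpr ⟨hjD, (hxa hxU) ▸ hja, (hyb hyU) ▸ hjb⟩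
  · have hjU : j ∈ U := by
      have := hJ.2.1 hj
      rw [← hDU, Finset.mem_union] at this
      tauto
    have := hno j (Finset.mem_inter.mpr ⟨hj, hjU⟩)
    have hcase : j ≤ x ∨ y ≤ j := by omega
    rcases hcase with hc | hc
    · have hxU : x ∈ U := by
        rcases hx with h | h
        · exfalso; rw [h] at hc; omega
        · exact h.2.1
      by_cases hyU : y ∈ U
      · rw [Rdiag_UU hxU hyU]
        exact Finset.mem_union_left _
          (Finset.mem_union_right _ (Finset.mem_filter.mpr ⟨hjU, hc⟩))
      · rw [Rdiag_UD hxU hyU]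
        exact Finset.mem_union_right _ (Finset.mem_filter.mpr ⟨hjU, hc⟩)
    · have hyU : y ∈ U := by
        rcases hy with h | h
        · exfalso; rw [h] at hc; omega
        · exact h.2.1
      by_cases hxU : x ∈ U
      · rw [Rdiag_UU hxU hyU]
        exact Finset.mem_union_right _ (Finset.mem_filter.mpr ⟨hjU, hc⟩)
      · rw [Rdiag_DU hxU hyU]
        exact Finset.mem_union_right _ (Finset.mem_filter.mpr ⟨hjU, hc⟩)

lemma mem_of_all_R (hDU : D ∪ U = Finset.Icc 1 n) (hdisj : Disjoint D U)
    {J : Finset ℕ} (hJ : IsNested n D J) (hJne : J ≠ Finset.Icc 1 n)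
    {i : ℕ} (hi : i ∈ Finset.Icc 1 n)
    (hall : ∀ p ∈ WJ n D U J, i ∈ Rdiag n D U p.1 p.2) : i ∈ J := by
  have hin : 1 ≤ i ∧ i ≤ n := by simpa [Finset.mem_Icc] using hi
  have haU : aI D J ∉ U := aI_notU hDU hdisj hJ.1 hJ.2.1
  have hbU : bI n D J ∉ U := bI_notU hDU hdisj hJ.2.1
  have han : aI D J ≤ n := aI_le_n hDU hJ.1 hJ.2.1
  have hbn : bI n D J ≤ n + 1 := bI_le_n1 hJ.2.1 hDU
  by_cases hjD : i ∈ D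
  · -- show aI < i < bI, conclude by nestedness
    have hiU : i ∉ U := notU_of_memD hdisj hjD
    by_cases hJU : (J ∩ U).Nonempty
    · set α := (J ∩ U).min' hJU with hα
      set β := (J ∩ U).max' hJU with hβ
      have hαU : α ∈ U := (Finset.mem_inter.mp (Finset.min'_mem _ hJU)).2
      have hβU : β ∈ U := (Finset.mem_inter.mp (Finset.max'_mem _ hJU)).2
      have hαn := U_pos hDU hαU
      have hβn := U_pos hDU hβU
      have ha_lt : aI D J < i := by
        rcases proper_first hDU hdisj hJ hJU with hp | ⟨h0, _⟩
        · have hmem := mem_WJ (n := n) (by omega) (by omega) (assoc_first hJ hJU) hp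
          have := hall _ hmem
          rw [Rdiag_DU haU hαU] at this
          rcases Finset.mem_union.mp this with h | h
          · exact (Finset.mem_filter.mp h).2
          · exact absurd (Finset.mem_filter.mp h).1 hiU
        · omega
      have hb_gt : i < bI n D J := by
        rcases proper_last hDU hdisj hJ hJU with hp | ⟨h1, _⟩
        · have hmem := mem_WJ (n := n) (by omega) (by omega) (assoc_last hJ hJU) hp
          have := hall _ hmem
          rw [Rdiag_UD hβU hbU] at this
          rcases Finset.mem_union.mp this with h | h
          · exact (Finset.mem_filter.mp h).2
          · exact absurd (Finset.mem_filter.mp h).1 hiU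
        · omega
      exact hJ.2.2 i hjD ha_lt hb_gt
    · have hJU' : J ∩ U = ∅ := Finset.not_nonempty_iff_eq_empty.mp hJU
      obtain ⟨j, hj⟩ := hJ.1
      have hmem := mem_WJ (n := n) (by omega) (by omega) (assoc_only hJ hJU')
        (proper_only hDU hdisj hJ hJU' hJne)
      have := hall _ hmem
      rw [Rdiag_DD haU hbU] at this
      have := Finset.mem_filter.mp this
      exact hJ.2.2 i hjD this.2.1 this.2.2
  · have hiU : i ∈ U := by
      have : i ∈ D ∪ U := by rw [hDU]; exact hi
      rcases Finset.mem_union.mp this with h | h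
      · exact absurd h hjD
      · exact h
    by_contra hiJ
    by_cases hJU : (J ∩ U).Nonempty
    · set α := (J ∩ U).min' hJU with hα
      set β := (J ∩ U).max' hJU with hβ
      have hαm := Finset.mem_inter.mp (Finset.min'_mem _ hJU)
      have hβm := Finset.mem_inter.mp (Finset.max'_mem _ hJU)
      have hαn := U_pos hDU hαm.2
      have hβn := U_pos hDU hβm.2
      by_cases h1 : i < α
      · rcases proper_first hDU hdisj hJ hJU with hp | ⟨h0, hle⟩
        · have hmem := mem_WJ (n := n) (by omega) (by omega) (assoc_first hJ hJU) hp
          have := hall _ hmem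
          rw [Rdiag_DU haU hαm.2] at this
          rcases Finset.mem_union.mp this with h | h
          · exact hjD (Finset.mem_filter.mp h).1
          · have := (Finset.mem_filter.mp h).2; omega
        · have := hle i hiU; omega
      · by_cases h2 : β < i
        · rcases proper_last hDU hdisj hJ hJU with hp | ⟨hb1, hle⟩
          · have hmem := mem_WJ (n := n) (by omega) (by omega) (assoc_last hJ hJU) hp
            have := hall _ hmem
            rw [Rdiag_UD hβm.2 hbU] at this
            rcases Finset.mem_union.mp this with h | h
            · exact hjD (Finset.mem_filter.mp h).1
            · have := (Finset.mem_filter.mp h).2; omega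
          · have := hle i hiU; omega
        · -- α ≤ i ≤ β, i ∉ J so α < i < β strictly
          have hαi : α < i := by
            rcases Nat.lt_or_ge α i with h | h
            · exact h
            · exfalso
              have heq : α = i := by omega
              have hαJ : α ∈ J := hαm.1
              rw [heq] at hαJ; exact hiJ hαJ
          have hiβ : i < β := by
            rcases Nat.lt_or_ge i β with h | h
            · exact h
            · exfalso
              have heq : β = i := by omega
              have hβJ : β ∈ J := hβm.1
              rw [heq] at hβJ; exact hiJ hβJ
          obtain ⟨x, y, hmem, hxu, huy, hxU, hyU⟩ := assoc_mid hDU hdisj hJ hiU hiJ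
            ⟨α, Finset.mem_inter.mpr ⟨hαm.1, hαm.2⟩, hαi⟩
            ⟨β, Finset.mem_inter.mpr ⟨hβm.1, hβm.2⟩, hiβ⟩
          have := hall _ hmem
          rw [Rdiag_UU hxU hyU] at this
          rcases Finset.mem_union.mp this with h | h
          · rcases Finset.mem_union.mp h with h | h
            · exact hjD h
            · have := (Finset.mem_filter.mp h).2; omega
          · have := (Finset.mem_filter.mp h).2; omega
    · have hJU' : J ∩ U = ∅ := Finset.not_nonempty_iff_eq_empty.mp hJU
      obtain ⟨j, hj⟩ := hJ.1
      have hmem := mem_WJ (n := n) (by omega) (by omega) (assoc_only hJ hJU')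
        (proper_only hDU hdisj hJ hJU' hJne)
      have := hall _ hmem
      rw [Rdiag_DD haU hbU] at this
      exact hjD (Finset.mem_filter.mp this).1

lemma WJ_nonempty (hDU : D ∪ U = Finset.Icc 1 n) (hdisj : Disjoint D U)
    {J : Finset ℕ} (hJ : IsNested n D J) (hJne : J ≠ Finset.Icc 1 n) :
    (WJ n D U J).Nonempty := by
  have han : aI D J ≤ n := aI_le_n hDU hJ.1 hJ.2.1
  have hbn : bI n D J ≤ n + 1 := bI_le_n1 hJ.2.1 hDU
  by_cases hJU : (J ∩ U).Nonempty
  · set α := (J ∩ U).min' hJU with hα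
    set β := (J ∩ U).max' hJU with hβ
    have hαm := Finset.mem_inter.mp (Finset.min'_mem _ hJU)
    have hβm := Finset.mem_inter.mp (Finset.max'_mem _ hJU)
    have hαn := U_pos hDU hαm.2
    have hβn := U_pos hDU hβm.2
    rcases proper_first hDU hdisj hJ hJU with hp | ⟨h0, hle⟩
    · exact ⟨(aI D J, α), mem_WJ (by omega) (by omega) (assoc_first hJ hJU) hp⟩
    · rcases proper_last hDU hdisj hJ hJU with hp | ⟨hb1, hle'⟩
      · exact ⟨(β, bI n D J), mem_WJ (by omega) (by omega) (assoc_last hJ hJU) hp⟩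
      · by_cases hmid : ∃ u ∈ U, u ∉ J ∧ α < u ∧ u < β
        · obtain ⟨u, huU, huJ, h1, h2⟩ := hmid
          obtain ⟨x, y, hmem, _⟩ := assoc_mid hDU hdisj hJ huU huJ
            ⟨α, Finset.mem_inter.mpr hαm, h1⟩ ⟨β, Finset.mem_inter.mpr hβm, h2⟩
          exact ⟨(x, y), hmem⟩
        · exfalso
          apply hJne
          apply Finset.Subset.antisymm hJ.2.1
          intro z hz
          have hz' : z ∈ D ∪ U := by rw [hDU]; exact hz
          have hzn : 1 ≤ z ∧ z ≤ n := by simpa [Finset.mem_Icc] using hz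
          rcases Finset.mem_union.mp hz' with hzD | hzU
          · exact hJ.2.2 z hzD (by omega) (by omega)
          · by_contra hzJ
            have hza := hle z hzU
            have hzb := hle' z hzU
            have : ¬ (α < z ∧ z < β) := by
              intro hc
              exact hmid ⟨z, hzU, hzJ, hc.1, hc.2⟩
            have : z = α ∨ z = β := by omega
            rcases this with h | h
            · rw [h] at hzJ; exact hzJ hαm.1
            · rw [h] at hzJ; exact hzJ hβm.1
  · have hJU' : J ∩ U = ∅ := Finset.not_nonempty_iff_eq_empty.mp hJU
    exact ⟨(aI D J, bI n D J), mem_WJ (by omega) (by omega) (assoc_only hJ hJU')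
      (proper_only hDU hdisj hJ hJU' hJne)⟩

lemma mem_nestedComponents_iff {I J : Finset ℕ} :
    J ∈ nestedComponents n D I ↔ J ⊆ I ∧ IsNested n D J ∧
      ∀ K ∈ I.powerset, IsNested n D K → J ⊆ K → J = K := by
  rw [nestedComponents, Finset.mem_filter, Finset.mem_powerset]

lemma singleton_nested {i : ℕ} (hi : i ∈ Finset.Icc 1 n) : IsNested n D {i} := by
  refine ⟨⟨i, Finset.mem_singleton_self i⟩, Finset.singleton_subset_iff.mpr hi, ?_⟩
  intro d hd hda hdb
  rw [Finset.mem_singleton]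
  by_contra hne
  rcases lt_trichotomy d i with h | h | h
  · have : d ≤ aI D {i} := le_aI (Finset.mem_insert_of_mem hd)
      (fun j hj => by rw [Finset.mem_singleton] at hj; omega)
    omega
  · exact hne h
  · have : bI n D {i} ≤ d := bI_le (Finset.mem_insert_of_mem hd)
      (fun j hj => by rw [Finset.mem_singleton] at hj; omega)
    omega

lemma exists_component {I : Finset ℕ} (hsub : I ⊆ Finset.Icc 1 n) {i : ℕ} (hi : i ∈ I) :
    ∃ J ∈ nestedComponents n D I, i ∈ J := by
  classical
  set S := I.powerset.filter (fun K => IsNested n D K ∧ i ∈ K) with hS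
  have hSne : S.Nonempty := by
    refine ⟨{i}, Finset.mem_filter.mpr ⟨Finset.mem_powerset.mpr ?_, singleton_nested (hsub hi), Finset.mem_singleton_self i⟩⟩
    exact Finset.singleton_subset_iff.mpr hi
  obtain ⟨M, hM, hmax⟩ := Finset.exists_max_image S Finset.card hSne
  have hM' := Finset.mem_filter.mp hM
  refine ⟨M, mem_nestedComponents_iff.mpr ⟨Finset.mem_powerset.mp hM'.1, hM'.2.1, ?_⟩, hM'.2.2⟩
  intro K hK hKn hMK
  have hKS : K ∈ S := Finset.mem_filter.mpr ⟨hK, hKn, hMK hM'.2.2⟩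
  exact Finset.eq_of_subset_of_card_le hMK (hmax K hKS)

end Helpers3
/-- for a nonempty proper subset `I` of `[n]` with nested components
`J_1, …, J_v`, each `W(J_i)` is nonempty and, writing `M_i` for the maximal (last)
proper diagonal of `W(J_i)`,
`I = ⋃_i ( R_{δ_{M_i}(J_i)} ∖ ⋃_{q ∈ W(J_i), q ≠ M_i} ([n] ∖ R_q) )`. -/
theorem statement7 (n : ℕ) (D U : Finset ℕ) (hn : 2 ≤ n)
    (hDU : D ∪ U = Finset.Icc 1 n) (hdisj : Disjoint D U) (h1D : 1 ∈ D) (hnD : n ∈ D)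
    (I : Finset ℕ) (hne : I.Nonempty) (hsub : I ⊆ Finset.Icc 1 n)
    (hpropersub : I ≠ Finset.Icc 1 n) :
    (∀ J ∈ nestedComponents n D I, (WJ n D U J).Nonempty)
    ∧ ∀ Mp : Finset ℕ → ℕ × ℕ,
        (∀ J ∈ nestedComponents n D I,
          Mp J ∈ WJ n D U J ∧ ∀ q ∈ WJ n D U J, q.1 ≤ (Mp J).1) →
        I = (nestedComponents n D I).biUnion fun J =>
              Rdiag n D U (Mp J).1 (Mp J).2 \
                ((WJ n D U J).erase (Mp J)).biUnion
                  (fun q => Finset.Icc 1 n \ Rdiag n D U q.1 q.2) := by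
  have hcompNe : ∀ J ∈ nestedComponents n D I, J ≠ Finset.Icc 1 n := by
    intro J hJ hc
    have hJI : J ⊆ I := (mem_nestedComponents_iff.mp hJ).1
    apply hpropersub
    apply Finset.Subset.antisymm hsub
    rw [← hc]; exact hJI
  have hcompNested : ∀ J ∈ nestedComponents n D I, IsNested n D J := fun J hJ =>
    (mem_nestedComponents_iff.mp hJ).2.1
  constructor
  · intro J hJ
    exact WJ_nonempty hDU hdisj (hcompNested J hJ) (hcompNe J hJ)
  · intro Mp hMp
    ext i
    simp only [Finset.mem_biUnion, Finset.mem_sdiff]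
    constructor
    · intro hiI
      obtain ⟨J, hJc, hiJ⟩ := exists_component hsub hiI
      have hJn := hcompNested J hJc
      have hMpW := (hMp J hJc).1
      have hMpA := (of_mem_WJ hMpW).1
      refine ⟨J, hJc, mem_Rdiag_of_mem hDU hdisj hJn hMpA hiJ, ?_⟩
      intro hc
      obtain ⟨q, hq, hq2⟩ := hc
      have hqW : q ∈ WJ n D U J := Finset.mem_of_mem_erase hq
      have hqA := (of_mem_WJ hqW).1
      exact hq2.2 (mem_Rdiag_of_mem hDU hdisj hJn hqA hiJ)
    · rintro ⟨J, hJc, hiR, hnot⟩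
      have hJn := hcompNested J hJc
      have hiIcc : i ∈ Finset.Icc 1 n := Rdiag_subset hDU _ _ hiR
      have hall : ∀ p ∈ WJ n D U J, i ∈ Rdiag n D U p.1 p.2 := by
        intro p hp
        by_cases hpM : p = Mp J
        · rw [hpM]; exact hiR
        · by_contra hiRp
          exact hnot ⟨p, Finset.mem_erase.mpr ⟨hpM, hp⟩, hiIcc, hiRp⟩
      have hiJ : i ∈ J := mem_of_all_R hDU hdisj hJn (hcompNe J hJc) hiIcc hall
      exact (mem_nestedComponents_iff.mp hJc).1 hiJ

end AssocPaper
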